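/- arXiv:0704.2562 — 10 statements merged into one kernel-verified Lean document; each statement's English description precedes it below -/
import Mathlib

section
/- Let A, Ã be an adjoint pair of closed densely defined operators on a Hilbert space H with boundary triplet {H⊕K, (Γ₁,Γ₂), (Γ̃₁,Γ̃₂)} satisfying the abstract Green formula (Ã*u,v) − (u,A*v) = (Γ₁u, Γ̃₂v) − (Γ₂u, Γ̃₁v). Let B ∈ L(K,H) and A_B = Ã* restricted to ker(Γ₁ − BΓ₂), and suppose λ ∈ ρ(A_B). Then for every f ∈ Ran(Γ₁ − BΓ₂) there exists a unique u ∈ ker(Ã* − λ) with (Γ₁ − BΓ₂)u = f; consequently the M-function M_B(λ) : Ran(Γ₁ − BΓ₂) → K defined by M_B(λ)(Γ₁ − BΓ₂)u = Γ₂u for u ∈ ker(Ã* − λ) is well defined. -/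
open scoped InnerProductSpace

/-- Boundary triplet setting: `T` plays the role of `Ã*` on its domain `domT ⊆ H`,
`Γ₁, Γ₂` the boundary operators, `B ∈ L(𝓚,𝓗)`.  `hres` says `λ ∈ ρ(A_B)`, i.e.
`A_B - λ` is a bijection from `ker(Γ₁ - BΓ₂)` onto `H`.  Conclusion: for every
`f ∈ Ran(Γ₁ - BΓ₂)` there is a unique `u ∈ ker(Ã* - λ)` with `(Γ₁ - BΓ₂)u = f`;
hence `M_B(λ)(Γ₁ - BΓ₂)u = Γ₂u` is a well-defined map on `Ran(Γ₁ - BΓ₂)`. -/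
theorem stmt_0 {H 𝓗 𝓚 : Type*}
    [NormedAddCommGroup H] [InnerProductSpace ℂ H] [CompleteSpace H]
    [NormedAddCommGroup 𝓗] [InnerProductSpace ℂ 𝓗] [CompleteSpace 𝓗]
    [NormedAddCommGroup 𝓚] [InnerProductSpace ℂ 𝓚] [CompleteSpace 𝓚]
    (domT : Submodule ℂ H) (T : domT →ₗ[ℂ] H)
    (Γ₁ : domT →ₗ[ℂ] 𝓗) (Γ₂ : domT →ₗ[ℂ] 𝓚)
    (B : 𝓚 →L[ℂ] 𝓗) (l : ℂ)
    (hres : ∀ h : H, ∃! u : domT, Γ₁ u - B (Γ₂ u) = 0 ∧ T u = l • (u : H) + h)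
    (f : 𝓗) (hf : ∃ w : domT, Γ₁ w - B (Γ₂ w) = f) :
    ∃! u : domT, T u = l • (u : H) ∧ Γ₁ u - B (Γ₂ u) = f := by
  obtain ⟨w, hw⟩ := hf
  obtain ⟨v, ⟨hv1, hv2⟩, hvu⟩ := hres (T w - l • (w : H))
  refine ⟨w - v, ⟨?_, ?_⟩, ?_⟩
  · simp only [map_sub, Submodule.coe_sub, smul_sub, hv2]
    abel
  · simp only [map_sub]
    rw [sub_sub_sub_comm, hw, hv1, sub_zero]
  · intro u ⟨hu1, hu2⟩
    have h := hvu (w - u) ⟨by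
      simp only [map_sub]
      rw [sub_sub_sub_comm, hw, hu2, sub_self], by
      simp only [map_sub, Submodule.coe_sub, smul_sub, hu1]; abel⟩
    have : u = w - v := by rw [← h]; abel
    exact this
end

section
/- Under the boundary triplet hypotheses, for λ ∈ ρ(A_B), the solution operator S_{λ,B} : Ran(Γ₁ − BΓ₂) → ker(Ã* − λ) defined by (Ã* − λ)S_{λ,B}f = 0 and (Γ₁ − BΓ₂)S_{λ,B}f = f is well defined, and for any w ∈ D(Ã*) with (Γ₁ − BΓ₂)w = f one has S_{λ,B}f = (I − (A_B − λ)^{-1}(Ã* − λ))w. -/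
open scoped InnerProductSpace

/-- Boundary triplet setting; `R` is the resolvent `(A_B - λ)⁻¹` of
`A_B = Ã*|_{ker(Γ₁ - BΓ₂)}` (hypotheses `hR`, `hRinv`).  Conclusion: the solution
operator `S_{λ,B}` is well defined on `Ran(Γ₁ - BΓ₂)` (unique `u ∈ ker(Ã*-λ)` with
`(Γ₁-BΓ₂)u = f`), and for any `w ∈ D(Ã*)` with `(Γ₁-BΓ₂)w = f` it is given by
`S_{λ,B}f = (I - (A_B-λ)⁻¹(Ã*-λ))w`. -/
theorem stmt_1 {H 𝓗 𝓚 : Type*}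
    [NormedAddCommGroup H] [InnerProductSpace ℂ H] [CompleteSpace H]
    [NormedAddCommGroup 𝓗] [InnerProductSpace ℂ 𝓗] [CompleteSpace 𝓗]
    [NormedAddCommGroup 𝓚] [InnerProductSpace ℂ 𝓚] [CompleteSpace 𝓚]
    (domT : Submodule ℂ H) (T : domT →ₗ[ℂ] H)
    (Γ₁ : domT →ₗ[ℂ] 𝓗) (Γ₂ : domT →ₗ[ℂ] 𝓚)
    (B : 𝓚 →L[ℂ] 𝓗) (l : ℂ)
    (R : H → domT)
    (hR : ∀ h : H, Γ₁ (R h) - B (Γ₂ (R h)) = 0 ∧ T (R h) = l • ((R h : H)) + h)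
    (hRinv : ∀ u : domT, Γ₁ u - B (Γ₂ u) = 0 → R (T u - l • (u : H)) = u)
    (f : 𝓗) (w : domT) (hw : Γ₁ w - B (Γ₂ w) = f) :
    (∃! u : domT, T u = l • (u : H) ∧ Γ₁ u - B (Γ₂ u) = f) ∧
    ∀ u : domT, T u = l • (u : H) → Γ₁ u - B (Γ₂ u) = f →
      u = w - R (T w - l • (w : H)) := by
  set h : H := T w - l • (w : H) with hh
  obtain ⟨hRb, hRT⟩ := hR h
  set u₀ : domT := w - R h with hu₀
  -- R 0 = 0
  have hR0 : R (0 : H) = 0 := by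
    have := hRinv 0 (by simp)
    simpa using this
  have hu₀T : T u₀ = l • (u₀ : H) := by
    have : T u₀ = T w - T (R h) := by simp [hu₀]
    rw [this, hRT, hh]
    push_cast [hu₀]
    module
  have hu₀b : Γ₁ u₀ - B (Γ₂ u₀) = f := by
    have : Γ₁ u₀ - B (Γ₂ u₀) = (Γ₁ w - B (Γ₂ w)) - (Γ₁ (R h) - B (Γ₂ (R h))) := by
      simp [hu₀]; abel
    rw [this, hw, hRb, sub_zero]
  have huniq : ∀ u : domT, T u = l • (u : H) → Γ₁ u - B (Γ₂ u) = f → u = u₀ := by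
    intro u hTu hbu
    set v : domT := u - u₀ with hv
    have hvb : Γ₁ v - B (Γ₂ v) = 0 := by
      have : Γ₁ v - B (Γ₂ v) = (Γ₁ u - B (Γ₂ u)) - (Γ₁ u₀ - B (Γ₂ u₀)) := by
        simp [hv]; abel
      rw [this, hbu, hu₀b, sub_self]
    have hvT : T v - l • (v : H) = 0 := by
      have : T v = T u - T u₀ := by simp [hv]
      rw [this, hTu, hu₀T]
      push_cast [hv]
      module
    have := hRinv v hvb
    rw [hvT, hR0] at this
    have : u - u₀ = 0 := this.symm
    exact sub_eq_zero.mp this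
  refine ⟨⟨u₀, ⟨hu₀T, hu₀b⟩, fun u hu => huniq u hu.1 hu.2⟩, fun u h1 h2 => huniq u h1 h2⟩
end

section
/- Let E = Ran(Γ₁ − BΓ₂) with norm ‖f‖_E² = ‖f‖_H² + ‖S_{λ,B}f‖_F², where F = ker(Ã* − λ) with the graph norm ‖u‖_F² = ‖u‖² + ‖Ã*u‖². Then E and F are Hilbert spaces and S_{λ,B}, regarded as an operator from the boundary space H into D(Ã*) with domain E, is closed. -/
open scoped InnerProductSpace

/-- Boundary triplet setting; `Ã*` (i.e. `T`) is closed (`hTclosed`: its graph is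
closed in `H × H`), `Γ₁ - BΓ₂` is bounded w.r.t. the graph norm (`hΓcont`), and
`λ ∈ ρ(A_B)` (`hres`).  Conclusion: `F = ker(Ã*-λ)` is a closed (hence complete,
i.e. Hilbert) subspace of `D(Ã*)` with the graph norm, and the solution operator
`S_{λ,B}`, as an operator from the boundary space `𝓗` into `D(Ã*)` with domain
`E = Ran(Γ₁-BΓ₂)`, is closed: its graph `{(f, (u, Ã*u)) : u ∈ ker(Ã*-λ),
(Γ₁-BΓ₂)u = f}` is closed in `𝓗 × (H × H)`; in particular `E` with the norm
`‖f‖² + ‖S_{λ,B}f‖_F²` is complete, i.e. a Hilbert space. -/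
theorem stmt_3 {H 𝓗 𝓚 : Type*}
    [NormedAddCommGroup H] [InnerProductSpace ℂ H] [CompleteSpace H]
    [NormedAddCommGroup 𝓗] [InnerProductSpace ℂ 𝓗] [CompleteSpace 𝓗]
    [NormedAddCommGroup 𝓚] [InnerProductSpace ℂ 𝓚] [CompleteSpace 𝓚]
    (domT : Submodule ℂ H) (T : domT →ₗ[ℂ] H)
    (Γ₁ : domT →ₗ[ℂ] 𝓗) (Γ₂ : domT →ₗ[ℂ] 𝓚)
    (B : 𝓚 →L[ℂ] 𝓗) (l : ℂ)
    (hTclosed : IsClosed {p : H × H | ∃ u : domT, p.1 = (u : H) ∧ p.2 = T u})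
    (hΓcont : ∃ c : ℝ, ∀ u : domT,
      ‖Γ₁ u - B (Γ₂ u)‖ ^ 2 ≤ c * (‖(u : H)‖ ^ 2 + ‖T u‖ ^ 2))
    (hres : ∀ h : H, ∃! u : domT, Γ₁ u - B (Γ₂ u) = 0 ∧ T u = l • (u : H) + h) :
    IsClosed {p : H × H | ∃ u : domT, T u = l • (u : H) ∧ p.1 = (u : H) ∧ p.2 = T u} ∧
    IsClosed {q : 𝓗 × (H × H) | ∃ u : domT, T u = l • (u : H) ∧
      Γ₁ u - B (Γ₂ u) = q.1 ∧ q.2.1 = (u : H) ∧ q.2.2 = T u} := by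
  classical
  set Γ : domT →ₗ[ℂ] 𝓗 := Γ₁ - (B.toLinearMap).comp Γ₂ with hΓdef
  have hΓ : ∀ w : domT, Γ w = Γ₁ w - B (Γ₂ w) := fun w => rfl
  obtain ⟨c, hc⟩ := hΓcont
  have h1 : IsClosed {p : H × H | ∃ u : domT, T u = l • (u : H) ∧ p.1 = (u : H) ∧ p.2 = T u} := by
    have hset : {p : H × H | ∃ u : domT, T u = l • (u : H) ∧ p.1 = (u : H) ∧ p.2 = T u}
        = {p : H × H | ∃ u : domT, p.1 = (u : H) ∧ p.2 = T u} ∩ {p : H × H | p.2 = l • p.1} := by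
      ext p
      constructor
      · rintro ⟨u, h0, ha, hb⟩
        exact ⟨⟨u, ha, hb⟩, show p.2 = l • p.1 by rw [hb, ha, h0]⟩
      · rintro ⟨⟨u, ha, hb⟩, h3⟩
        exact ⟨u, by rw [← hb, h3, ha], ha, hb⟩
    rw [hset]
    exact hTclosed.inter (isClosed_eq continuous_snd (continuous_fst.const_smul l))
  refine ⟨h1, ?_⟩
  rw [← isSeqClosed_iff_isClosed]
  intro q q₀ hq hlim
  choose u hu1 hu2 hu3 hu4 using hq
  have hlim2 : Filter.Tendsto (fun n => (q n).2) Filter.atTop (nhds q₀.2) :=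
    (continuous_snd.tendsto q₀).comp hlim
  have hmem : q₀.2 ∈ {p : H × H | ∃ u : domT, T u = l • (u : H) ∧ p.1 = (u : H) ∧ p.2 = T u} :=
    h1.isSeqClosed (fun n => ⟨u n, hu1 n, hu3 n, hu4 n⟩) hlim2
  obtain ⟨v, hv1, hv2, hv3⟩ := hmem
  have ha : Filter.Tendsto (fun n => ((u n : H))) Filter.atTop (nhds (v : H)) := by
    have h := (continuous_fst.tendsto q₀.2).comp hlim2
    rw [show q₀.2.1 = (v : H) from hv2] at h
    exact h.congr hu3
  have hb : Filter.Tendsto (fun n => T (u n)) Filter.atTop (nhds (T v)) := by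
    have h := (continuous_snd.tendsto q₀.2).comp hlim2
    rw [show q₀.2.2 = T v from hv3] at h
    exact h.congr hu4
  have hna : Filter.Tendsto (fun n => ‖((u n : H)) - (v : H)‖) Filter.atTop (nhds 0) :=
    tendsto_iff_norm_sub_tendsto_zero.mp ha
  have hnb : Filter.Tendsto (fun n => ‖T (u n) - T v‖) Filter.atTop (nhds 0) :=
    tendsto_iff_norm_sub_tendsto_zero.mp hb
  have hg : Filter.Tendsto
      (fun n => c * (‖((u n - v : domT) : H)‖ ^ 2 + ‖T (u n - v)‖ ^ 2))
      Filter.atTop (nhds 0) := by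
    have h := ((hna.pow 2).add (hnb.pow 2)).const_mul c
    simp only [map_sub] at *
    simpa using h
  have hf : Filter.Tendsto (fun n => ‖Γ (u n - v)‖ ^ 2) Filter.atTop (nhds 0) :=
    squeeze_zero (fun n => by positivity)
      (fun n => by rw [hΓ]; exact hc (u n - v)) hg
  have hΓn : Filter.Tendsto (fun n => ‖Γ (u n) - Γ v‖) Filter.atTop (nhds 0) := by
    have h' := (Real.continuous_sqrt.tendsto 0).comp hf
    simp only [Real.sqrt_zero, Function.comp] at h'
    have h'' := h'.congr fun n => Real.sqrt_sq (norm_nonneg _)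
    exact h''.congr fun n => by rw [map_sub]
  have hΓlim : Filter.Tendsto (fun n => Γ (u n)) Filter.atTop (nhds (Γ v)) :=
    tendsto_iff_norm_sub_tendsto_zero.mpr hΓn
  have hq1 : Filter.Tendsto (fun n => (q n).1) Filter.atTop (nhds q₀.1) :=
    (continuous_fst.tendsto q₀).comp hlim
  have hq1' : Filter.Tendsto (fun n => Γ (u n)) Filter.atTop (nhds q₀.1) :=
    hq1.congr fun n => by rw [← hu2 n, hΓ]
  have hGv : Γ v = q₀.1 := tendsto_nhds_unique hΓlim hq1'
  exact ⟨v, hv1, by rw [← hΓ, hGv], hv2, hv3⟩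
end

section
/- For λ ∈ ρ(A_B) ∩ ρ(A_{B+C}), on Ran(Γ₁ − BΓ₂) the M-functions satisfy the identity M_{B+C}(λ)(I − C M_B(λ)) = M_B(λ). -/
open scoped InnerProductSpace

/-- Boundary triplet setting; `λ ∈ ρ(A_B) ∩ ρ(A_{B+C})`.  The identity
`M_{B+C}(λ)(I - C M_B(λ)) = M_B(λ)` on `Ran(Γ₁ - BΓ₂)`: if `u ∈ ker(Ã*-λ)`
realises `M_B(λ)f = Γ₂u` for `f = (Γ₁-BΓ₂)u`, and `v ∈ ker(Ã*-λ)` realises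
`M_{B+C}(λ)` applied to `(I - C M_B(λ))f = f - C Γ₂ u`, then `Γ₂ v = Γ₂ u`. -/
theorem stmt_9 {H 𝓗 𝓚 : Type*}
    [NormedAddCommGroup H] [InnerProductSpace ℂ H] [CompleteSpace H]
    [NormedAddCommGroup 𝓗] [InnerProductSpace ℂ 𝓗] [CompleteSpace 𝓗]
    [NormedAddCommGroup 𝓚] [InnerProductSpace ℂ 𝓚] [CompleteSpace 𝓚]
    (domT : Submodule ℂ H) (T : domT →ₗ[ℂ] H)
    (Γ₁ : domT →ₗ[ℂ] 𝓗) (Γ₂ : domT →ₗ[ℂ] 𝓚)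
    (B C : 𝓚 →L[ℂ] 𝓗) (l : ℂ)
    (hresB : ∀ h : H, ∃! u : domT, Γ₁ u - B (Γ₂ u) = 0 ∧ T u = l • (u : H) + h)
    (hresBC : ∀ h : H, ∃! u : domT, Γ₁ u - (B + C) (Γ₂ u) = 0 ∧ T u = l • (u : H) + h) :
    ∀ u v : domT, T u = l • (u : H) → T v = l • (v : H) →
      Γ₁ v - (B + C) (Γ₂ v) = (Γ₁ u - B (Γ₂ u)) - C (Γ₂ u) →
      Γ₂ v = Γ₂ u := by
  intro u v hu hv hΓ
  obtain ⟨w, -, huniq⟩ := hresBC 0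
  have h1 : v - u = w := by
    apply huniq
    constructor
    · have : Γ₁ v - (B + C) (Γ₂ v) = Γ₁ u - (B + C) (Γ₂ u) := by
        rw [hΓ]; simp [sub_sub]
      have h2 : (Γ₁ v - (B + C) (Γ₂ v)) - (Γ₁ u - (B + C) (Γ₂ u)) = 0 := by
        rw [this]; abel
      simp only [map_sub, ContinuousLinearMap.add_apply, map_sub] at h2 ⊢
      rw [← h2]; abel
    · push_cast
      simp [map_sub, hu, hv, smul_sub]
  have h0 : (0 : domT) = w := by
    apply huniq
    simp
  have : v = u := by
    have := h1.trans h0.symm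
    exact sub_eq_zero.mp this
  rw [this]
end

section
/- For λ ∈ ρ(A_B) ∩ ρ(A_{B+C}), the solution operators satisfy S_{λ,B+C}(I − CΓ₂S_{λ,B}) = S_{λ,B} on Ran(Γ₁ − BΓ₂). -/
open scoped InnerProductSpace

/-- Boundary triplet setting; `λ ∈ ρ(A_B) ∩ ρ(A_{B+C})`.  The identity
`S_{λ,B+C}(I - CΓ₂S_{λ,B}) = S_{λ,B}` on `Ran(Γ₁ - BΓ₂)`: if `u ∈ ker(Ã*-λ)`
realises `S_{λ,B}f = u` for `f = (Γ₁-BΓ₂)u`, and `v ∈ ker(Ã*-λ)` realises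
`S_{λ,B+C}` applied to `(I - C Γ₂ S_{λ,B})f = f - C Γ₂ u`, then `v = u`, i.e. `S_{λ,B+C}(I - CΓ₂S_{λ,B}) = S_{λ,B}` on `Ran(Γ₁ - BΓ₂)`. -/
theorem stmt_10 {H 𝓗 𝓚 : Type*}
    [NormedAddCommGroup H] [InnerProductSpace ℂ H] [CompleteSpace H]
    [NormedAddCommGroup 𝓗] [InnerProductSpace ℂ 𝓗] [CompleteSpace 𝓗]
    [NormedAddCommGroup 𝓚] [InnerProductSpace ℂ 𝓚] [CompleteSpace 𝓚]
    (domT : Submodule ℂ H) (T : domT →ₗ[ℂ] H)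
    (Γ₁ : domT →ₗ[ℂ] 𝓗) (Γ₂ : domT →ₗ[ℂ] 𝓚)
    (B C : 𝓚 →L[ℂ] 𝓗) (l : ℂ)
    (hresB : ∀ h : H, ∃! u : domT, Γ₁ u - B (Γ₂ u) = 0 ∧ T u = l • (u : H) + h)
    (hresBC : ∀ h : H, ∃! u : domT, Γ₁ u - (B + C) (Γ₂ u) = 0 ∧ T u = l • (u : H) + h) :
    ∀ u v : domT, T u = l • (u : H) → T v = l • (v : H) →
      Γ₁ v - (B + C) (Γ₂ v) = (Γ₁ u - B (Γ₂ u)) - C (Γ₂ u) →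
      v = u := by
  intro u v hu hv hbd
  obtain ⟨z, _, huniq⟩ := hresBC 0
  have h1 : v - u = z := by
    apply huniq
    constructor
    · have : Γ₁ (v - u) - (B + C) (Γ₂ (v - u))
          = (Γ₁ v - (B + C) (Γ₂ v)) - (Γ₁ u - (B + C) (Γ₂ u)) := by
        simp [map_sub]; abel
      rw [this, hbd]
      simp [ContinuousLinearMap.add_apply]
      abel
    · have : T (v - u) = T v - T u := map_sub T v u
      rw [this, hu, hv]
      push_cast
      simp [smul_sub]
  have h2 : (0 : domT) = z := by
    apply huniq
    simp
  have := h1.trans h2.symm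
  have : v = u := by
    have := sub_eq_zero.mp this
    exact this
  exact this
end

section
/- For λ, λ₀ ∈ ρ(A_B), the M-function has the representation M_B(λ) = Γ₂(I + (λ − λ₀)(A_B − λ)^{-1}) S_{λ₀,B} = Γ₂ (A_B − λ₀)(A_B − λ)^{-1} S_{λ₀,B} on Ran(Γ₁ − BΓ₂). -/
open scoped InnerProductSpace

/-- Boundary triplet setting; `λ, λ₀ ∈ ρ(A_B)`, `R = (A_B - λ)⁻¹`.  Representation
`M_B(λ) = Γ₂(I + (λ-λ₀)(A_B-λ)⁻¹)S_{λ₀,B} = Γ₂(A_B-λ₀)(A_B-λ)⁻¹S_{λ₀,B}` on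
`Ran(Γ₁ - BΓ₂)`: if `u₀ = S_{λ₀,B}f` and `u = S_{λ,B}f` (so `M_B(λ)f = Γ₂u`),
then `Γ₂ u = Γ₂ (u₀ + (λ-λ₀) R u₀) = Γ₂ u₀ + (λ-λ₀) Γ₂ (R u₀)`. -/
theorem stmt_11 {H 𝓗 𝓚 : Type*}
    [NormedAddCommGroup H] [InnerProductSpace ℂ H] [CompleteSpace H]
    [NormedAddCommGroup 𝓗] [InnerProductSpace ℂ 𝓗] [CompleteSpace 𝓗]
    [NormedAddCommGroup 𝓚] [InnerProductSpace ℂ 𝓚] [CompleteSpace 𝓚]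
    (domT : Submodule ℂ H) (T : domT →ₗ[ℂ] H)
    (Γ₁ : domT →ₗ[ℂ] 𝓗) (Γ₂ : domT →ₗ[ℂ] 𝓚)
    (B : 𝓚 →L[ℂ] 𝓗) (l l₀ : ℂ)
    (hres : ∀ h : H, ∃! u : domT, Γ₁ u - B (Γ₂ u) = 0 ∧ T u = l • (u : H) + h)
    (hres₀ : ∀ h : H, ∃! u : domT, Γ₁ u - B (Γ₂ u) = 0 ∧ T u = l₀ • (u : H) + h)
    (R : H → domT)
    (hR : ∀ h : H, Γ₁ (R h) - B (Γ₂ (R h)) = 0 ∧ T (R h) = l • ((R h : H)) + h)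
    (f : 𝓗) (u u₀ : domT)
    (hu₀ : T u₀ = l₀ • (u₀ : H) ∧ Γ₁ u₀ - B (Γ₂ u₀) = f)
    (hu : T u = l • (u : H) ∧ Γ₁ u - B (Γ₂ u) = f) :
    Γ₂ u = Γ₂ (u₀ + (l - l₀) • R ((u₀ : H))) ∧
    Γ₂ u = Γ₂ u₀ + (l - l₀) • Γ₂ (R ((u₀ : H))) := by
  obtain ⟨w, hw, huniq⟩ := hres (((l - l₀) • u₀ : domT) : H)
  have h1 : u - u₀ = w := by
    apply huniq
    constructor
    · have e : Γ₁ (u - u₀) - B (Γ₂ (u - u₀)) = (Γ₁ u - B (Γ₂ u)) - (Γ₁ u₀ - B (Γ₂ u₀)) := by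
        simp [map_sub]; abel
      rw [e, hu.2, hu₀.2, sub_self]
    · push_cast
      rw [map_sub, hu.1, hu₀.1]
      push_cast
      ring_nf
      module
  have h2 : (l - l₀) • R ((u₀ : H)) = w := by
    apply huniq
    obtain ⟨hb, ht⟩ := hR ((u₀ : H))
    constructor
    · simp [map_smul, hb]
      rw [← smul_sub, hb, smul_zero]
    · push_cast
      rw [map_smul, ht]
      push_cast
      ring_nf
      module
  have key : u = u₀ + (l - l₀) • R ((u₀ : H)) := by
    rw [h2, ← h1]; abel
  constructor
  · rw [key]
  · rw [key, map_add, map_smul]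
end

section
/- (Krein formula) Let B, C ∈ L(K,H) and λ ∈ ρ(A_B) ∩ ρ(A_C) ∩ ρ(A_{B+C}). Then (A_B − λ)^{-1} = (A_C − λ)^{-1} − S_{λ,B+C}(I − C M_B(λ))(Γ₁ − BΓ₂)(A_C − λ)^{-1}, and moreover (Γ₁ − BΓ₂)(A_C − λ)^{-1} = (C − B)Γ₂(A_C − λ)^{-1}. -/
open scoped InnerProductSpace

/-- Kreĭn formula.  Boundary triplet setting; `λ ∈ ρ(A_B) ∩ ρ(A_C) ∩ ρ(A_{B+C})`.
For `h ∈ H` let `x = (A_C-λ)⁻¹h`, `y = (A_B-λ)⁻¹h`, let `u = S_{λ,B}((Γ₁-BΓ₂)x)`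
(so `M_B(λ)(Γ₁-BΓ₂)x = Γ₂u`) and `v = S_{λ,B+C}((I - C M_B(λ))(Γ₁-BΓ₂)x)`.  Then
`y = x - v`, i.e. `(A_B-λ)⁻¹ = (A_C-λ)⁻¹ - S_{λ,B+C}(I-CM_B(λ))(Γ₁-BΓ₂)(A_C-λ)⁻¹`;
moreover `(Γ₁-BΓ₂)(A_C-λ)⁻¹h = (C-B)Γ₂(A_C-λ)⁻¹h`. -/
theorem stmt_12 {H 𝓗 𝓚 : Type*}
    [NormedAddCommGroup H] [InnerProductSpace ℂ H] [CompleteSpace H]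
    [NormedAddCommGroup 𝓗] [InnerProductSpace ℂ 𝓗] [CompleteSpace 𝓗]
    [NormedAddCommGroup 𝓚] [InnerProductSpace ℂ 𝓚] [CompleteSpace 𝓚]
    (domT : Submodule ℂ H) (T : domT →ₗ[ℂ] H)
    (Γ₁ : domT →ₗ[ℂ] 𝓗) (Γ₂ : domT →ₗ[ℂ] 𝓚)
    (B C : 𝓚 →L[ℂ] 𝓗) (l : ℂ)
    (hresB : ∀ h : H, ∃! u : domT, Γ₁ u - B (Γ₂ u) = 0 ∧ T u = l • (u : H) + h)
    (hresC : ∀ h : H, ∃! u : domT, Γ₁ u - C (Γ₂ u) = 0 ∧ T u = l • (u : H) + h)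
    (hresBC : ∀ h : H, ∃! u : domT, Γ₁ u - (B + C) (Γ₂ u) = 0 ∧ T u = l • (u : H) + h)
    (h : H) (x y u v : domT)
    (hx : Γ₁ x - C (Γ₂ x) = 0 ∧ T x = l • (x : H) + h)
    (hy : Γ₁ y - B (Γ₂ y) = 0 ∧ T y = l • (y : H) + h)
    (hu : T u = l • (u : H) ∧ Γ₁ u - B (Γ₂ u) = Γ₁ x - B (Γ₂ x))
    (hv : T v = l • (v : H) ∧
      Γ₁ v - (B + C) (Γ₂ v) = (Γ₁ x - B (Γ₂ x)) - C (Γ₂ u)) :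
    (y : H) = (x : H) - (v : H) ∧
    Γ₁ x - B (Γ₂ x) = C (Γ₂ x) - B (Γ₂ x) := by
  obtain ⟨hx1, hx2⟩ := hx
  obtain ⟨hy1, hy2⟩ := hy
  obtain ⟨hu1, hu2⟩ := hu
  obtain ⟨hv1, hv2⟩ := hv
  have hΓx : Γ₁ x = C (Γ₂ x) := by
    have := sub_eq_zero.mp hx1; exact this
  -- u = v via uniqueness for the homogeneous (B+C)-problem
  obtain ⟨w, hw, hwu⟩ := hresBC 0
  have huv0 : u - v = w := by
    apply hwu
    constructor
    · simp only [map_sub, ContinuousLinearMap.add_apply] at *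
      have : Γ₁ v - (B (Γ₂ v) + C (Γ₂ v)) = Γ₁ u - (B (Γ₂ u) + C (Γ₂ u)) := by
        rw [hv2, ← hu2]; abel
      abel_nf
      abel_nf at this
      linear_combination (norm := abel_nf) -this
    · have : ((u - v : domT) : H) = (u : H) - (v : H) := rfl
      rw [map_sub, hu1, hv1, this, smul_sub]; abel
  have h0w : (0 : domT) = w := by
    apply hwu
    simp
  have huv : u = v := by
    have := huv0.trans h0w.symm
    have h2 : u - v = 0 := this
    exact sub_eq_zero.mp h2
  have hxv : y = x - v := by
    obtain ⟨z, hz, hzu⟩ := hresB h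
    have h1 : y = z := hzu y ⟨hy1, hy2⟩
    have h2 : x - v = z := by
      apply hzu
      constructor
      · have hΓv : Γ₁ v - B (Γ₂ v) = Γ₁ x - B (Γ₂ x) := by
          rw [← huv]; exact hu2
        simp only [map_sub]
        linear_combination (norm := abel_nf) -hΓv
      · have : ((x - v : domT) : H) = (x : H) - (v : H) := rfl
        rw [map_sub, hx2, hv1, this, smul_sub]; abel
    rw [h1, ← h2]
  refine ⟨?_, by rw [hΓx]⟩
  rw [hxv]; rfl
end

section
/- Let C ∈ L(K,H) and λ ∈ ρ(A₀) ∩ ρ(A_C), where A₀ = Ã*|_{ker Γ₁}. Then (A₀ − λ)^{-1} = (A_C − λ)^{-1} − S_{λ,C}(I − C M₀(λ)) Γ₁ (A_C − λ)^{-1}. -/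
open scoped InnerProductSpace

/-- Kreĭn formula for `B = 0`.  Boundary triplet setting; `A₀ = Ã*|_{ker Γ₁}`,
`A_C = Ã*|_{ker(Γ₁ - CΓ₂)}`, `λ ∈ ρ(A₀) ∩ ρ(A_C)`.  For `h ∈ H` let
`x = (A_C-λ)⁻¹h`, `y = (A₀-λ)⁻¹h`, `u = S_{λ,0}(Γ₁ x)` (so `M₀(λ)Γ₁x = Γ₂u`)
and `v = S_{λ,C}((I - C M₀(λ))Γ₁ x)`.  Then `y = x - v`, i.e.
`(A₀-λ)⁻¹ = (A_C-λ)⁻¹ - S_{λ,C}(I - C M₀(λ))Γ₁(A_C-λ)⁻¹`. -/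
theorem stmt_13 {H 𝓗 𝓚 : Type*}
    [NormedAddCommGroup H] [InnerProductSpace ℂ H] [CompleteSpace H]
    [NormedAddCommGroup 𝓗] [InnerProductSpace ℂ 𝓗] [CompleteSpace 𝓗]
    [NormedAddCommGroup 𝓚] [InnerProductSpace ℂ 𝓚] [CompleteSpace 𝓚]
    (domT : Submodule ℂ H) (T : domT →ₗ[ℂ] H)
    (Γ₁ : domT →ₗ[ℂ] 𝓗) (Γ₂ : domT →ₗ[ℂ] 𝓚)
    (C : 𝓚 →L[ℂ] 𝓗) (l : ℂ)
    (hres₀ : ∀ h : H, ∃! u : domT, Γ₁ u = 0 ∧ T u = l • (u : H) + h)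
    (hresC : ∀ h : H, ∃! u : domT, Γ₁ u - C (Γ₂ u) = 0 ∧ T u = l • (u : H) + h)
    (h : H) (x y u v : domT)
    (hx : Γ₁ x - C (Γ₂ x) = 0 ∧ T x = l • (x : H) + h)
    (hy : Γ₁ y = 0 ∧ T y = l • (y : H) + h)
    (hu : T u = l • (u : H) ∧ Γ₁ u = Γ₁ x)
    (hv : T v = l • (v : H) ∧ Γ₁ v - C (Γ₂ v) = Γ₁ x - C (Γ₂ u)) :
    (y : H) = (x : H) - (v : H) := by
  -- Step 1: `u = v`, by uniqueness for the homogeneous `A_C` problem.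
  have huv : u = v := by
    obtain ⟨w, -, hwu⟩ := hresC 0
    have h1 : u - v = w := by
      refine hwu _ ⟨?_, ?_⟩
      · have hEq : Γ₁ u - C (Γ₂ u) = Γ₁ v - C (Γ₂ v) := by rw [hv.2, hu.2]
        simp only [map_sub]
        rw [sub_sub_sub_comm, hEq, sub_self]
      · push_cast
        simp only [map_sub, hu.1, hv.1, smul_sub]
        abel
    have h2 : (0 : domT) = w := hwu _ ⟨by simp, by simp⟩
    have := h1.trans h2.symm
    rwa [sub_eq_zero] at this
  -- Step 2: `x - v - y = 0`, by uniqueness for the homogeneous `A₀` problem.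
  have hz : x - v - y = 0 := by
    obtain ⟨w, -, hwu⟩ := hres₀ 0
    have h1 : x - v - y = w := by
      refine hwu _ ⟨?_, ?_⟩
      · simp only [map_sub, ← huv, hu.2, hy.1, sub_self, sub_zero]
      · push_cast
        simp only [map_sub, hx.2, hv.1, hy.2, smul_sub]
        abel
    have h2 : (0 : domT) = w := hwu _ ⟨by simp, by simp⟩
    exact h1.trans h2.symm
  have : ((x - v - y : domT) : H) = 0 := by rw [hz]; rfl
  push_cast at this
  rw [sub_sub, sub_eq_zero] at this
  rw [this]; abel
end

section
/- If there exists C ∈ L(K,H) with μ ∈ ρ(A_C), then the unique continuation property holds for Ã* − μ, i.e. ker(Ã* − μ) ∩ ker Γ₁ ∩ ker Γ₂ = {0}. -/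
open scoped InnerProductSpace

/-- Boundary triplet setting.  If there exists `C ∈ L(𝓚,𝓗)` with
`μ ∈ ρ(A_C)`, `A_C = Ã*|_{ker(Γ₁ - CΓ₂)}` (`hresC`), then the unique
continuation property holds for `Ã* - μ`:
`ker(Ã* - μ) ∩ ker Γ₁ ∩ ker Γ₂ = {0}`. -/
theorem stmt_16 {H 𝓗 𝓚 : Type*}
    [NormedAddCommGroup H] [InnerProductSpace ℂ H] [CompleteSpace H]
    [NormedAddCommGroup 𝓗] [InnerProductSpace ℂ 𝓗] [CompleteSpace 𝓗]
    [NormedAddCommGroup 𝓚] [InnerProductSpace ℂ 𝓚] [CompleteSpace 𝓚]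
    (domT : Submodule ℂ H) (T : domT →ₗ[ℂ] H)
    (Γ₁ : domT →ₗ[ℂ] 𝓗) (Γ₂ : domT →ₗ[ℂ] 𝓚)
    (C : 𝓚 →L[ℂ] 𝓗) (μ : ℂ)
    (hresC : ∀ h : H, ∃! u : domT, Γ₁ u - C (Γ₂ u) = 0 ∧ T u = μ • (u : H) + h) :
    ∀ u : domT, T u = μ • (u : H) → Γ₁ u = 0 → Γ₂ u = 0 → (u : H) = 0 := by
  intro u hT h1 h2
  obtain ⟨v, _, huniq⟩ := hresC 0
  have hu : u = (0 : domT) := by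
    have e1 : u = v := huniq u ⟨by simp [h1, h2], by simpa using hT⟩
    have e2 : (0 : domT) = v := huniq 0 (by simp)
    rw [e1, e2]
  simp [hu]
end

section
/- For the Hain–Lüst type block operator with boundary conditions determined by B = diag(cot β, −cot α), the entries of the 2×2 M-function are m₁₁(λ) = −y₂(1,λ)/(y₂'(1,λ) + cot β · y₂(1,λ)), m₁₂(λ) = m₂₁(λ) = sin α /(y₂'(1,λ) + cot β · y₂(1,λ)), and m₂₂(λ) = sin α cos α + sin²α · (y₁'(1,λ) + cot β · y₁(1,λ))/(y₂'(1,λ) + cot β · y₂(1,λ)), where y₁, y₂ solve −y'' + (q − λ)y + (w²/(λ−u))y = 0 with initial conditions y₁(0) = cos α, y₁'(0) = sin α and y₂(0) = −sin α, y₂'(0) = cos α. -/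
open MeasureTheory
open Set

lemma my_ibp (f f' g'' : ℝ → ℂ)
    (hf : ∀ x ∈ Set.Icc (0:ℝ) 1, HasDerivAt f (f' x) x)
    (hf' : ContinuousOn f' (Set.Icc (0:ℝ) 1))
    (hg'' : IntervalIntegrable g'' volume 0 1) :
    f 1 * (∫ t in (0:ℝ)..1, g'' t)
      = (∫ x in (0:ℝ)..1, f' x * ∫ t in (0:ℝ)..x, g'' t)
        + ∫ x in (0:ℝ)..1, f x * g'' x := by
  have hIoc : volume.restrict (Ioc (0:ℝ) 1) = volume.restrict (Icc (0:ℝ) 1) :=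
    Measure.restrict_congr_set Ioc_ae_eq_Icc
  have hg''I : IntegrableOn g'' (Icc (0:ℝ) 1) volume := by
    rw [IntegrableOn, ← hIoc]
    exact (intervalIntegrable_iff_integrableOn_Ioc_of_le zero_le_one).mp hg''
  have hf'I : IntegrableOn f' (Icc (0:ℝ) 1) volume := hf'.integrableOn_Icc
  have hfc : ContinuousOn f (Icc (0:ℝ) 1) := fun x hx =>
    (hf x hx).continuousAt.continuousWithinAt
  set μ := volume.restrict (Icc (0:ℝ) 1) with hμ
  set k : ℝ → ℝ → ℂ := fun s x => if x ≤ s then f' s * g'' x else 0 with hk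
  have hkint : Integrable (Function.uncurry k) (μ.prod μ) := by
    have : Function.uncurry k =
        Set.indicator {p : ℝ × ℝ | p.2 ≤ p.1} (fun p => f' p.1 * g'' p.2) := by
      ext p
      simp [Function.uncurry, hk, Set.indicator_apply, Set.mem_setOf_eq]
    rw [this]
    exact (Integrable.mul_prod hf'I hg''I).indicator
      (measurableSet_le measurable_snd measurable_fst)
  have E1 : ∀ s ∈ Icc (0:ℝ) 1,
      (∫ x, k s x ∂μ) = f' s * ∫ t in (0:ℝ)..s, g'' t := by
    intro s hs
    have : (fun x => k s x) = Set.indicator (Iic s) (fun x => f' s * g'' x) := by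
      ext x; simp [hk, Set.indicator_apply, Set.mem_Iic]
    rw [this, integral_indicator measurableSet_Iic, hμ,
      Measure.restrict_restrict measurableSet_Iic]
    have hset : Iic s ∩ Icc (0:ℝ) 1 = Icc 0 s := by
      ext t
      simp only [mem_inter_iff, mem_Iic, mem_Icc]
      constructor
      · rintro ⟨h1, h2, h3⟩; exact ⟨h2, h1⟩
      · rintro ⟨h1, h2⟩; exact ⟨h2, h1, h2.trans hs.2⟩
    rw [hset, integral_Icc_eq_integral_Ioc, ← intervalIntegral.integral_of_le hs.1,
      intervalIntegral.integral_const_mul]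
  have E2 : ∀ x ∈ Icc (0:ℝ) 1,
      (∫ s, k s x ∂μ) = (f 1 - f x) * g'' x := by
    intro x hx
    have : (fun s => k s x) = Set.indicator (Ici x) (fun s => f' s * g'' x) := by
      ext s; simp [hk, Set.indicator_apply, Set.mem_Ici]
    rw [this, integral_indicator measurableSet_Ici, hμ,
      Measure.restrict_restrict measurableSet_Ici]
    have hset : Ici x ∩ Icc (0:ℝ) 1 = Icc x 1 := by
      ext t
      simp only [mem_inter_iff, mem_Ici, mem_Icc]
      constructor
      · rintro ⟨h1, h2, h3⟩; exact ⟨h1, h3⟩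
      · rintro ⟨h1, h2⟩; exact ⟨h1, hx.1.trans h1, h2⟩
    have hsub : Set.uIcc x 1 ⊆ Icc (0:ℝ) 1 := by
      rw [Set.uIcc_of_le hx.2]
      exact Icc_subset_Icc hx.1 le_rfl
    have hftc : ∫ s in x..1, f' s = f 1 - f x :=
      intervalIntegral.integral_eq_sub_of_hasDerivAt
        (fun t ht => hf t (hsub ht))
        ((hf'.mono hsub).intervalIntegrable)
    rw [hset, integral_Icc_eq_integral_Ioc, ← intervalIntegral.integral_of_le hx.2,
      intervalIntegral.integral_mul_const, hftc]
  have swap : (∫ s, (∫ x, k s x ∂μ) ∂μ) = ∫ x, (∫ s, k s x ∂μ) ∂μ :=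
    integral_integral_swap hkint
  have L : (∫ s, (∫ x, k s x ∂μ) ∂μ) = ∫ s in Icc (0:ℝ) 1, f' s * ∫ t in (0:ℝ)..s, g'' t :=
    setIntegral_congr_fun measurableSet_Icc E1
  have R : (∫ x, (∫ s, k s x ∂μ) ∂μ) = ∫ x in Icc (0:ℝ) 1, (f 1 - f x) * g'' x :=
    setIntegral_congr_fun measurableSet_Icc E2
  have hfsplit : (∫ x in Icc (0:ℝ) 1, (f 1 - f x) * g'' x)
      = f 1 * (∫ x in Icc (0:ℝ) 1, g'' x) - ∫ x in Icc (0:ℝ) 1, f x * g'' x := by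
    have h1 : IntegrableOn (fun x => f 1 * g'' x) (Icc (0:ℝ) 1) volume :=
      hg''I.const_mul _
    have h2 : IntegrableOn (fun x => f x * g'' x) (Icc (0:ℝ) 1) volume :=
      hg''I.continuousOn_mul hfc isCompact_Icc
    rw [← integral_const_mul]
    rw [← integral_sub h1 h2]
    apply setIntegral_congr_fun measurableSet_Icc
    intro x _
    ring
  have conv : ∀ F : ℝ → ℂ, (∫ x in (0:ℝ)..1, F x) = ∫ x in Icc (0:ℝ) 1, F x := by
    intro F
    rw [intervalIntegral.integral_of_le zero_le_one, ← integral_Icc_eq_integral_Ioc]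
  rw [conv, conv, conv]
  have key : (∫ s in Icc (0:ℝ) 1, f' s * ∫ t in (0:ℝ)..s, g'' t)
      = f 1 * (∫ x in Icc (0:ℝ) 1, g'' x) - ∫ x in Icc (0:ℝ) 1, f x * g'' x := by
    rw [← L, swap, R, hfsplit]
  rw [key]
  ring

lemma my_cont_deriv (y' y'' : ℝ → ℂ)
    (h2 : IntervalIntegrable y'' volume 0 1)
    (h3 : ∀ x ∈ Set.Icc (0:ℝ) 1, y' x = y' 0 + ∫ t in (0:ℝ)..x, y'' t) :
    ContinuousOn y' (Set.Icc (0:ℝ) 1) := by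
  have H : ContinuousOn (fun x => y' 0 + ∫ t in (0:ℝ)..x, y'' t) (Set.Icc (0:ℝ) 1) := by
    refine continuousOn_const.add ?_
    rw [← Set.uIcc_of_le (zero_le_one (α := ℝ))]
    exact intervalIntegral.continuousOn_primitive_interval' h2 left_mem_uIcc
  exact H.congr fun x hx => h3 x hx

lemma my_wronskian (y₁ y₁' y₁'' y₂ y₂' y₂'' c : ℝ → ℂ)
    (hy₁1 : ∀ x ∈ Set.Icc (0:ℝ) 1, HasDerivAt y₁ (y₁' x) x)
    (hy₁2 : IntervalIntegrable y₁'' volume 0 1)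
    (hy₁3 : ∀ x ∈ Set.Icc (0:ℝ) 1, y₁' x = y₁' 0 + ∫ t in (0:ℝ)..x, y₁'' t)
    (hy₂1 : ∀ x ∈ Set.Icc (0:ℝ) 1, HasDerivAt y₂ (y₂' x) x)
    (hy₂2 : IntervalIntegrable y₂'' volume 0 1)
    (hy₂3 : ∀ x ∈ Set.Icc (0:ℝ) 1, y₂' x = y₂' 0 + ∫ t in (0:ℝ)..x, y₂'' t)
    (h1 : ∀ᵐ x ∂(volume.restrict (Set.Icc (0:ℝ) 1)), y₁'' x = c x * y₁ x)
    (h2 : ∀ᵐ x ∂(volume.restrict (Set.Icc (0:ℝ) 1)), y₂'' x = c x * y₂ x) :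
    y₁ 1 * y₂' 1 - y₂ 1 * y₁' 1 = y₁ 0 * y₂' 0 - y₂ 0 * y₁' 0 := by
  have huIcc : Set.uIcc (0:ℝ) 1 = Set.Icc (0:ℝ) 1 := Set.uIcc_of_le zero_le_one
  have hc1 : ContinuousOn y₁' (Set.Icc (0:ℝ) 1) := my_cont_deriv y₁' y₁'' hy₁2 hy₁3
  have hc2 : ContinuousOn y₂' (Set.Icc (0:ℝ) 1) := my_cont_deriv y₂' y₂'' hy₂2 hy₂3
  have hcy₁ : ContinuousOn y₁ (Set.Icc (0:ℝ) 1) := fun x hx =>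
    (hy₁1 x hx).continuousAt.continuousWithinAt
  have hcy₂ : ContinuousOn y₂ (Set.Icc (0:ℝ) 1) := fun x hx =>
    (hy₂1 x hx).continuousAt.continuousWithinAt
  have hmem : ∀ x ∈ Set.uIcc (0:ℝ) 1, x ∈ Set.Icc (0:ℝ) 1 := fun x hx => huIcc ▸ hx
  -- step A
  have A : y₁ 1 * (y₂' 1 - y₂' 0)
      = (∫ x in (0:ℝ)..1, y₁' x * (y₂' x - y₂' 0)) + ∫ x in (0:ℝ)..1, y₁ x * y₂'' x := by
    have := my_ibp y₁ y₁' y₂'' hy₁1 hc1 hy₂2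
    have e1 : (∫ t in (0:ℝ)..1, y₂'' t) = y₂' 1 - y₂' 0 := by
      rw [hy₂3 1 (by norm_num)]; ring
    have e2 : (∫ x in (0:ℝ)..1, y₁' x * ∫ t in (0:ℝ)..x, y₂'' t)
        = ∫ x in (0:ℝ)..1, y₁' x * (y₂' x - y₂' 0) := by
      apply intervalIntegral.integral_congr
      intro x hx
      have hr := hy₂3 x (hmem x hx)
      dsimp only
      rw [hr]; ring
    rw [e1, e2] at this
    exact this
  have B : y₂ 1 * (y₁' 1 - y₁' 0)
      = (∫ x in (0:ℝ)..1, y₂' x * (y₁' x - y₁' 0)) + ∫ x in (0:ℝ)..1, y₂ x * y₁'' x := by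
    have := my_ibp y₂ y₂' y₁'' hy₂1 hc2 hy₁2
    have e1 : (∫ t in (0:ℝ)..1, y₁'' t) = y₁' 1 - y₁' 0 := by
      rw [hy₁3 1 (by norm_num)]; ring
    have e2 : (∫ x in (0:ℝ)..1, y₂' x * ∫ t in (0:ℝ)..x, y₁'' t)
        = ∫ x in (0:ℝ)..1, y₂' x * (y₁' x - y₁' 0) := by
      apply intervalIntegral.integral_congr
      intro x hx
      have hr := hy₁3 x (hmem x hx)
      dsimp only
      rw [hr]; ring
    rw [e1, e2] at this
    exact this
  -- step C
  have hI1 : IntervalIntegrable (fun x => y₁' x * (y₂' x - y₂' 0)) volume 0 1 := by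
    apply ContinuousOn.intervalIntegrable
    rw [huIcc]; exact hc1.mul (hc2.sub continuousOn_const)
  have hI2 : IntervalIntegrable (fun x => y₂' x * (y₁' x - y₁' 0)) volume 0 1 := by
    apply ContinuousOn.intervalIntegrable
    rw [huIcc]; exact hc2.mul (hc1.sub continuousOn_const)
  have hI3 : IntervalIntegrable (fun x => y₁' 0 * y₂' x) volume 0 1 := by
    apply ContinuousOn.intervalIntegrable
    rw [huIcc]; exact continuousOn_const.mul hc2
  have hI4 : IntervalIntegrable (fun x => y₂' 0 * y₁' x) volume 0 1 := by
    apply ContinuousOn.intervalIntegrable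
    rw [huIcc]; exact continuousOn_const.mul hc1
  have ftc1 : (∫ x in (0:ℝ)..1, y₁' x) = y₁ 1 - y₁ 0 :=
    intervalIntegral.integral_eq_sub_of_hasDerivAt (fun t ht => hy₁1 t (hmem t ht))
      (by apply ContinuousOn.intervalIntegrable; rw [huIcc]; exact hc1)
  have ftc2 : (∫ x in (0:ℝ)..1, y₂' x) = y₂ 1 - y₂ 0 :=
    intervalIntegral.integral_eq_sub_of_hasDerivAt (fun t ht => hy₂1 t (hmem t ht))
      (by apply ContinuousOn.intervalIntegrable; rw [huIcc]; exact hc2)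
  have C : (∫ x in (0:ℝ)..1, y₁' x * (y₂' x - y₂' 0))
        - (∫ x in (0:ℝ)..1, y₂' x * (y₁' x - y₁' 0))
      = y₁' 0 * (y₂ 1 - y₂ 0) - y₂' 0 * (y₁ 1 - y₁ 0) := by
    rw [← intervalIntegral.integral_sub hI1 hI2]
    have : (∫ x in (0:ℝ)..1, (y₁' x * (y₂' x - y₂' 0) - y₂' x * (y₁' x - y₁' 0)))
        = ∫ x in (0:ℝ)..1, (y₁' 0 * y₂' x - y₂' 0 * y₁' x) := by
      apply intervalIntegral.integral_congr
      intro x _; ring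
    rw [this, intervalIntegral.integral_sub hI3 hI4,
      intervalIntegral.integral_const_mul, intervalIntegral.integral_const_mul, ftc1, ftc2]
  -- step D
  have hJ1 : IntervalIntegrable (fun x => y₁ x * y₂'' x) volume 0 1 :=
    hy₂2.continuousOn_mul (huIcc ▸ hcy₁)
  have hJ2 : IntervalIntegrable (fun x => y₂ x * y₁'' x) volume 0 1 :=
    hy₁2.continuousOn_mul (huIcc ▸ hcy₂)
  have D : (∫ x in (0:ℝ)..1, y₁ x * y₂'' x) = ∫ x in (0:ℝ)..1, y₂ x * y₁'' x := by
    rw [← sub_eq_zero, ← intervalIntegral.integral_sub hJ1 hJ2,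
      intervalIntegral.integral_of_le zero_le_one]
    apply integral_eq_zero_of_ae
    rw [Measure.restrict_congr_set Ioc_ae_eq_Icc]
    filter_upwards [h1, h2] with x e1 e2
    simp only [Pi.zero_apply]
    rw [e1, e2]; ring
  linear_combination A - B + C + D
/-- The Hain–Lüst type block operator `Ã*(y,z) = (-y'' + qy + wz, wy + uz)` on
`H²(0,1) × L²(0,1)` with boundary operators `Γ₁(y,z) = (-y'(1), y'(0))`,
`Γ₂(y,z) = (y(1), y(0))` and `B = diag(cot β, -cot α)`; `λ ∉ essran(u)`
(`hess`).  `M` is the `2×2` `M`-function: `M(Γ₁ - BΓ₂)(y,z) = Γ₂(y,z)` for every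
`(y,z) ∈ ker(Ã* - λ)` (`hM`).  Let `y₁, y₂` solve
`-y'' + (q-λ)y + (w²/(λ-u))y = 0` with `y₁(0) = cos α, y₁'(0) = sin α` and
`y₂(0) = -sin α, y₂'(0) = cos α`, and suppose the denominator
`d = y₂'(1) + cot β · y₂(1)` is nonzero.  Then
`m₁₁ = -y₂(1)/d`, `m₁₂ = m₂₁ = sin α / d`, and
`m₂₂ = sin α cos α + sin²α (y₁'(1) + cot β y₁(1))/d`. -/
theorem stmt_19 (q u w : ℝ → ℝ)
    (hq : Measurable q) (hu : Measurable u) (hw : Measurable w)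
    (hqb : ∃ Cq : ℝ, ∀ᵐ x ∂(volume.restrict (Set.Icc (0:ℝ) 1)), |q x| ≤ Cq)
    (hub : ∃ Cu : ℝ, ∀ᵐ x ∂(volume.restrict (Set.Icc (0:ℝ) 1)), |u x| ≤ Cu)
    (hwb : ∃ Cw : ℝ, ∀ᵐ x ∂(volume.restrict (Set.Icc (0:ℝ) 1)), |w x| ≤ Cw)
    (l : ℂ) (δ : ℝ) (hδ : 0 < δ)
    (hess : ∀ᵐ x ∂(volume.restrict (Set.Icc (0:ℝ) 1)), δ ≤ ‖l - (u x : ℂ)‖)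
    (α β : ℝ) (hsα : Real.sin α ≠ 0) (hsβ : Real.sin β ≠ 0)
    (M : Matrix (Fin 2) (Fin 2) ℂ)
    -- `M` is the `M`-function: for every kernel element `(y, z)` of `Ã* - λ`,
    -- `M ((Γ₁ - BΓ₂)(y,z)) = Γ₂(y,z)`.
    (hM : ∀ y y' y'' z : ℝ → ℂ,
      (∀ x ∈ Set.Icc (0:ℝ) 1, HasDerivAt y (y' x) x) →
      IntervalIntegrable y'' volume 0 1 →
      (∀ x ∈ Set.Icc (0:ℝ) 1, y' x = y' 0 + ∫ t in (0:ℝ)..x, y'' t) →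
      (∀ᵐ x ∂(volume.restrict (Set.Icc (0:ℝ) 1)),
        -y'' x + (q x : ℂ) * y x + (w x : ℂ) * z x = l * y x ∧
        (w x : ℂ) * y x + (u x : ℂ) * z x = l * z x) →
      M.mulVec
        ![-(y' 1) - ((Real.cos β / Real.sin β : ℝ) : ℂ) * y 1,
          y' 0 + ((Real.cos α / Real.sin α : ℝ) : ℂ) * y 0]
        = ![y 1, y 0])
    (y₁ y₁' y₁'' y₂ y₂' y₂'' : ℝ → ℂ)
    (hy₁1 : ∀ x ∈ Set.Icc (0:ℝ) 1, HasDerivAt y₁ (y₁' x) x)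
    (hy₁2 : IntervalIntegrable y₁'' volume 0 1)
    (hy₁3 : ∀ x ∈ Set.Icc (0:ℝ) 1, y₁' x = y₁' 0 + ∫ t in (0:ℝ)..x, y₁'' t)
    (hy₁ode : ∀ᵐ x ∂(volume.restrict (Set.Icc (0:ℝ) 1)),
      -y₁'' x + ((q x : ℂ) - l) * y₁ x + ((w x : ℂ) ^ 2 / (l - (u x : ℂ))) * y₁ x = 0)
    (hy₁ic : y₁ 0 = (Real.cos α : ℂ) ∧ y₁' 0 = (Real.sin α : ℂ))
    (hy₂1 : ∀ x ∈ Set.Icc (0:ℝ) 1, HasDerivAt y₂ (y₂' x) x)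
    (hy₂2 : IntervalIntegrable y₂'' volume 0 1)
    (hy₂3 : ∀ x ∈ Set.Icc (0:ℝ) 1, y₂' x = y₂' 0 + ∫ t in (0:ℝ)..x, y₂'' t)
    (hy₂ode : ∀ᵐ x ∂(volume.restrict (Set.Icc (0:ℝ) 1)),
      -y₂'' x + ((q x : ℂ) - l) * y₂ x + ((w x : ℂ) ^ 2 / (l - (u x : ℂ))) * y₂ x = 0)
    (hy₂ic : y₂ 0 = -(Real.sin α : ℂ) ∧ y₂' 0 = (Real.cos α : ℂ))
    (hd : y₂' 1 + ((Real.cos β / Real.sin β : ℝ) : ℂ) * y₂ 1 ≠ 0) :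
    M 0 0 = -(y₂ 1) / (y₂' 1 + ((Real.cos β / Real.sin β : ℝ) : ℂ) * y₂ 1) ∧
    M 0 1 = (Real.sin α : ℂ) / (y₂' 1 + ((Real.cos β / Real.sin β : ℝ) : ℂ) * y₂ 1) ∧
    M 1 0 = (Real.sin α : ℂ) / (y₂' 1 + ((Real.cos β / Real.sin β : ℝ) : ℂ) * y₂ 1) ∧
    M 1 1 = ((Real.sin α * Real.cos α : ℝ) : ℂ) + ((Real.sin α : ℂ)) ^ 2 *
      ((y₁' 1 + ((Real.cos β / Real.sin β : ℝ) : ℂ) * y₁ 1)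
        / (y₂' 1 + ((Real.cos β / Real.sin β : ℝ) : ℂ) * y₂ 1)) := by
  have hne : ∀ᵐ x ∂(volume.restrict (Set.Icc (0:ℝ) 1)), l - (u x : ℂ) ≠ 0 := by
    filter_upwards [hess] with x hx
    intro h0
    rw [h0] at hx
    simp at hx
    linarith
  -- apply hM to (y₁, z₁)
  have hode1 : ∀ᵐ x ∂(volume.restrict (Set.Icc (0:ℝ) 1)),
      -y₁'' x + (q x : ℂ) * y₁ x + (w x : ℂ) * ((w x : ℂ) * y₁ x / (l - (u x : ℂ))) = l * y₁ x ∧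
      (w x : ℂ) * y₁ x + (u x : ℂ) * ((w x : ℂ) * y₁ x / (l - (u x : ℂ)))
        = l * ((w x : ℂ) * y₁ x / (l - (u x : ℂ))) := by
    filter_upwards [hy₁ode, hne] with x hx h0
    constructor
    · linear_combination hx
    · field_simp
      ring
  have hode2 : ∀ᵐ x ∂(volume.restrict (Set.Icc (0:ℝ) 1)),
      -y₂'' x + (q x : ℂ) * y₂ x + (w x : ℂ) * ((w x : ℂ) * y₂ x / (l - (u x : ℂ))) = l * y₂ x ∧
      (w x : ℂ) * y₂ x + (u x : ℂ) * ((w x : ℂ) * y₂ x / (l - (u x : ℂ)))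
        = l * ((w x : ℂ) * y₂ x / (l - (u x : ℂ))) := by
    filter_upwards [hy₂ode, hne] with x hx h0
    constructor
    · linear_combination hx
    · field_simp
      ring
  have E1 := hM y₁ y₁' y₁'' (fun x => (w x : ℂ) * y₁ x / (l - (u x : ℂ))) hy₁1 hy₁2 hy₁3 hode1
  have E2 := hM y₂ y₂' y₂'' (fun x => (w x : ℂ) * y₂ x / (l - (u x : ℂ))) hy₂1 hy₂2 hy₂3 hode2
  have e10 := congrFun E1 0
  have e11 := congrFun E1 1
  have e20 := congrFun E2 0
  have e21 := congrFun E2 1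
  simp only [Matrix.mulVec, dotProduct, Fin.sum_univ_two, Matrix.cons_val_zero,
    Matrix.cons_val_one, Matrix.head_cons] at e10 e11 e20 e21
  obtain ⟨i10, i11⟩ := hy₁ic
  obtain ⟨i20, i21⟩ := hy₂ic
  rw [i10, i11] at e10 e11
  rw [i20, i21] at e20 e21
  -- Wronskian
  have hW : y₁ 1 * y₂' 1 - y₂ 1 * y₁' 1 = 1 := by
    have h1 : ∀ᵐ x ∂(volume.restrict (Set.Icc (0:ℝ) 1)),
        y₁'' x = ((q x : ℂ) - l + (w x : ℂ) ^ 2 / (l - (u x : ℂ))) * y₁ x := by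
      filter_upwards [hy₁ode] with x hx
      linear_combination -hx
    have h2 : ∀ᵐ x ∂(volume.restrict (Set.Icc (0:ℝ) 1)),
        y₂'' x = ((q x : ℂ) - l + (w x : ℂ) ^ 2 / (l - (u x : ℂ))) * y₂ x := by
      filter_upwards [hy₂ode] with x hx
      linear_combination -hx
    have := my_wronskian y₁ y₁' y₁'' y₂ y₂' y₂''
      (fun x => (q x : ℂ) - l + (w x : ℂ) ^ 2 / (l - (u x : ℂ)))
      hy₁1 hy₁2 hy₁3 hy₂1 hy₂2 hy₂3 h1 h2
    rw [i10, i11, i20, i21] at this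
    rw [this]
    have pc : ((Real.sin α : ℂ))^2 + ((Real.cos α : ℂ))^2 = 1 := by
      norm_cast
      exact Real.sin_sq_add_cos_sq α
    linear_combination pc
  have hsc : ((Real.sin α : ℝ) : ℂ) ≠ 0 := Complex.ofReal_ne_zero.mpr hsα
  have pyth : ((Real.sin α : ℂ))^2 + ((Real.cos α : ℂ))^2 = 1 := by
    norm_cast
    exact Real.sin_sq_add_cos_sq α
  have hcast : ((Real.cos α / Real.sin α : ℝ) : ℂ)
      = (Real.cos α : ℂ) / (Real.sin α : ℂ) := by push_cast; ring
  rw [hcast] at e10 e11 e20 e21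
  set sa : ℂ := ((Real.sin α : ℝ) : ℂ) with hsa
  set ca : ℂ := ((Real.cos α : ℝ) : ℂ) with hca
  set cb : ℂ := ((Real.cos β / Real.sin β : ℝ) : ℂ) with hcbdef
  set D : ℂ := y₂' 1 + cb * y₂ 1 with hD
  have hz : (ca + ca / sa * -sa : ℂ) = 0 := by field_simp; ring
  have ho : (sa + ca / sa * ca : ℂ) * sa = 1 := by
    field_simp
    linear_combination pyth
  have g1 : M 0 0 * D = -(y₂ 1) := by linear_combination -e20 + M 0 1 * hz
  have g3 : M 1 0 * D = sa := by linear_combination -e21 + M 1 1 * hz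
  have g2 : M 0 1 * D = sa := by
    linear_combination (sa * D) * e10 - (M 0 1 * D) * ho
      + (sa * (y₁' 1 + cb * y₁ 1)) * g1 + sa * hW
  have g4 : M 1 1 * D = sa * ca * D + sa ^ 2 * (y₁' 1 + cb * y₁ 1) := by
    linear_combination (sa * D) * e11 - (M 1 1 * D) * ho
      + (sa * (y₁' 1 + cb * y₁ 1)) * g3
  refine ⟨?_, ?_, ?_, ?_⟩
  · rw [eq_div_iff hd]; exact g1
  · rw [eq_div_iff hd]; exact g2
  · rw [eq_div_iff hd]; exact g3
  · have hmc : ((Real.sin α * Real.cos α : ℝ) : ℂ) = sa * ca := Complex.ofReal_mul _ _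
    rw [hmc]
    field_simp
    linear_combination g4
end
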